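/- arXiv:2401.13387 — 5 statements merged into one kernel-verified Lean document; each statement's English description precedes it below -/
import Mathlib

section
/- Chain rule inequality for semantic entropies with two variables: H_s(Ũ) + H_s(Ṽ|U) ≤ H_s(Ũ,Ṽ) ≤ H(V) + H_s(Ũ|V) ≤ H(U,V), where H_s(Ṽ|U) = -∑_u ∑_j p(u) P(V_j|u) log₂ P(V_j|u) with P(V_j|u) = ∑_{v∈V_j} p(v|u). -/
open Finset

/-- Probability of the block of index `i` under the partition induced by `blk`. -/
noncomputable def blockProb {U B : Type*} [Fintype U] [DecidableEq B]
    (p : U → ℝ) (blk : U → B) (i : B) : ℝ :=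
  ∑ u : U, if blk u = i then p u else 0

/-- Semantic entropy: entropy of the block probabilities. -/
noncomputable def semEntropy {U B : Type*} [Fintype U] [Fintype B] [DecidableEq B]
    (p : U → ℝ) (blk : U → B) : ℝ :=
  -∑ i : B, blockProb p blk i * Real.logb 2 (blockProb p blk i)

/-- Shannon entropy of a pmf on a finite alphabet (base 2, convention 0·log 0 = 0). -/
noncomputable def shannonEntropy {U : Type*} [Fintype U] (p : U → ℝ) : ℝ :=
  -∑ u : U, p u * Real.logb 2 (p u)

/-- Semantic conditional entropy `H_s(Ṽ|U)` of the semantic variable induced by the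
partition `blkV` of `V`, conditioned on the syntactic variable `U`, for the joint
pmf `p` on `U × V`. -/
noncomputable def condSemEntropy {U V J : Type*} [Fintype U] [Fintype V] [Fintype J]
    [DecidableEq J] (p : U × V → ℝ) (blkV : V → J) : ℝ :=
  -∑ u : U, ∑ j : J,
    (∑ v : V, if blkV v = j then p (u, v) else 0) *
      Real.logb 2 ((∑ v : V, if blkV v = j then p (u, v) else 0) / (∑ v : V, p (u, v)))

private lemma coarsen_lemma {ι : Type*} (s : Finset ι) (a : ι → ℝ)
    (ha : ∀ k ∈ s, 0 ≤ a k) :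
    -((∑ k ∈ s, a k) * Real.log (∑ k ∈ s, a k)) ≤ ∑ k ∈ s, -(a k * Real.log (a k)) := by
  have hterm : ∀ k ∈ s, a k * (-Real.log (∑ k ∈ s, a k)) ≤ -(a k * Real.log (a k)) := by
    intro k hk
    rcases eq_or_lt_of_le (ha k hk) with h0 | h0
    · simp [← h0]
    · have hle : a k ≤ ∑ k ∈ s, a k := Finset.single_le_sum ha hk
      have := Real.log_le_log h0 hle
      nlinarith
  calc -((∑ k ∈ s, a k) * Real.log (∑ k ∈ s, a k))
      = ∑ k ∈ s, a k * (-Real.log (∑ k ∈ s, a k)) := by rw [← Finset.sum_mul]; ring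
    _ ≤ _ := Finset.sum_le_sum hterm

private lemma log_sum_lemma {ι : Type*} (s : Finset ι) (a b : ι → ℝ)
    (ha : ∀ k ∈ s, 0 ≤ a k) (hb : ∀ k ∈ s, 0 ≤ b k)
    (hab : ∀ k ∈ s, a k ≠ 0 → 0 < b k) :
    (∑ k ∈ s, a k) * Real.log ((∑ k ∈ s, a k) / (∑ k ∈ s, b k)) ≤
      ∑ k ∈ s, a k * Real.log (a k / b k) := by
  set A := ∑ k ∈ s, a k with hA
  set B := ∑ k ∈ s, b k with hB
  have hA0 : 0 ≤ A := Finset.sum_nonneg ha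
  by_cases hBz : B = 0
  · have hb0 : ∀ k ∈ s, b k = 0 := by
      intro k hk
      exact le_antisymm (hBz ▸ Finset.single_le_sum hb hk) (hb k hk)
    have ha0 : ∀ k ∈ s, a k = 0 := by
      intro k hk
      by_contra h
      exact absurd (hb0 k hk) (ne_of_gt (hab k hk h))
    have : A = 0 := Finset.sum_eq_zero ha0
    rw [this, Finset.sum_eq_zero (fun k hk => by rw [ha0 k hk]; ring)]
    simp
  · have hB0 : 0 < B := lt_of_le_of_ne (Finset.sum_nonneg hb) (Ne.symm hBz)
    have hterm : ∀ k ∈ s, a k * Real.log (A / B) + (a k - A / B * b k) ≤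
        a k * Real.log (a k / b k) := by
      intro k hk
      rcases eq_or_lt_of_le (ha k hk) with h0 | h0
      · rw [← h0]
        simp only [zero_mul, zero_add, zero_sub]
        linarith [mul_nonneg (div_nonneg hA0 hB0.le) (hb k hk)]
      · have hbk : 0 < b k := hab k hk h0.ne'
        have hAk : 0 < A := lt_of_lt_of_le h0 (Finset.single_le_sum ha hk)
        have hx : 0 < (A / B) / (a k / b k) := div_pos (div_pos hAk hB0) (div_pos h0 hbk)
        have h1 : Real.log (A / B) - Real.log (a k / b k) ≤ b k * A / (a k * B) - 1 := by
          have e : (A / B) / (a k / b k) = b k * A / (a k * B) := by field_simp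
          calc Real.log (A / B) - Real.log (a k / b k)
              = Real.log ((A / B) / (a k / b k)) :=
                (Real.log_div (ne_of_gt (div_pos hAk hB0)) (ne_of_gt (div_pos h0 hbk))).symm
            _ ≤ (A / B) / (a k / b k) - 1 := Real.log_le_sub_one_of_pos hx
            _ = b k * A / (a k * B) - 1 := by rw [e]
        have h2 := mul_le_mul_of_nonneg_left h1 h0.le
        have h3 : a k * (b k * A / (a k * B)) = A / B * b k := by field_simp
        rw [mul_sub, mul_sub, mul_one, h3] at h2
        linarith
    calc A * Real.log (A / B)
        = ∑ k ∈ s, (a k * Real.log (A / B) + (a k - A / B * b k)) := by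
          rw [Finset.sum_add_distrib, Finset.sum_sub_distrib, ← Finset.sum_mul,
            ← Finset.mul_sum, ← hA, ← hB]
          field_simp; ring
      _ ≤ _ := Finset.sum_le_sum hterm

private lemma coarsen_logb {ι : Type*} (s : Finset ι) (a : ι → ℝ)
    (ha : ∀ k ∈ s, 0 ≤ a k) :
    -((∑ k ∈ s, a k) * Real.logb 2 (∑ k ∈ s, a k)) ≤ ∑ k ∈ s, -(a k * Real.logb 2 (a k)) := by
  have h := coarsen_lemma s a ha
  have h2 : (0:ℝ) < Real.log 2 := Real.log_pos one_lt_two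
  simp only [Real.logb, ← mul_div_assoc, ← neg_div]
  rw [← Finset.sum_div]
  exact div_le_div_of_nonneg_right h h2.le

private lemma log_sum_logb {ι : Type*} (s : Finset ι) (a b : ι → ℝ)
    (ha : ∀ k ∈ s, 0 ≤ a k) (hb : ∀ k ∈ s, 0 ≤ b k)
    (hab : ∀ k ∈ s, a k ≠ 0 → 0 < b k) :
    (∑ k ∈ s, a k) * Real.logb 2 ((∑ k ∈ s, a k) / (∑ k ∈ s, b k)) ≤
      ∑ k ∈ s, a k * Real.logb 2 (a k / b k) := by
  have h := log_sum_lemma s a b ha hb hab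
  have h2 : (0:ℝ) < Real.log 2 := Real.log_pos one_lt_two
  simp only [Real.logb, ← mul_div_assoc]
  rw [← Finset.sum_div]
  exact div_le_div_of_nonneg_right h h2.le

private lemma cond_identity {V I : Type*} [Fintype V] [Fintype I] (pV : V → ℝ)
    (b : V → I → ℝ) (hb : ∀ v i, 0 ≤ b v i) (hbv : ∀ v, ∑ i : I, b v i = pV v) :
    (-∑ v : V, pV v * Real.logb 2 (pV v)) +
      (-∑ v : V, ∑ i : I, b v i * Real.logb 2 (b v i / pV v)) =
    -∑ v : V, ∑ i : I, b v i * Real.logb 2 (b v i) := by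
  have key : ∀ v : V, ∑ i : I, b v i * Real.logb 2 (b v i / pV v) =
      (∑ i : I, b v i * Real.logb 2 (b v i)) - pV v * Real.logb 2 (pV v) := by
    intro v
    have hterm : ∀ i : I, b v i * Real.logb 2 (b v i / pV v) =
        b v i * Real.logb 2 (b v i) - b v i * Real.logb 2 (pV v) := by
      intro i
      rcases eq_or_lt_of_le (hb v i) with h0 | h0
      · simp [← h0]
      · have hpv : 0 < pV v := by
          rw [← hbv v]
          exact lt_of_lt_of_le h0 (Finset.single_le_sum (fun i _ => hb v i) (Finset.mem_univ i))
        rw [Real.logb_div h0.ne' hpv.ne', mul_sub]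
    rw [Finset.sum_congr rfl (fun i _ => hterm i), Finset.sum_sub_distrib,
      ← Finset.sum_mul, hbv v]
  rw [Finset.sum_congr rfl (fun v _ => key v), Finset.sum_sub_distrib]
  ring

private lemma ineq3 {U V I : Type*} [Fintype U] [Fintype V] [Fintype I] [DecidableEq I]
    (p : U × V → ℝ) (blkU : U → I) (hp : ∀ x, 0 ≤ p x) :
    shannonEntropy (fun v => ∑ u : U, p (u, v)) +
      condSemEntropy (fun x : V × U => p (x.2, x.1)) blkU ≤ shannonEntropy p := by
  classical
  have hbnn : ∀ (v : V) (i : I) (u : U), 0 ≤ (if blkU u = i then p (u, v) else 0) := by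
    intro v i u; by_cases h : blkU u = i <;> simp [h, hp (u, v)]
  have hbv : ∀ v : V, ∑ i : I, (∑ u : U, if blkU u = i then p (u, v) else 0)
      = ∑ u : U, p (u, v) := by
    intro v
    rw [Finset.sum_comm]
    exact Finset.sum_congr rfl fun u _ => by simp [Finset.sum_ite_eq]
  have hid := cond_identity (fun v => ∑ u : U, p (u, v))
      (fun v i => ∑ u : U, if blkU u = i then p (u, v) else 0)
      (fun v i => Finset.sum_nonneg fun u _ => hbnn v i u) hbv
  simp only [shannonEntropy, condSemEntropy]
  rw [hid]
  have step : ∀ (v : V) (i : I),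
      -((∑ u : U, if blkU u = i then p (u, v) else 0) *
          Real.logb 2 (∑ u : U, if blkU u = i then p (u, v) else 0)) ≤
        ∑ u : U, (if blkU u = i then -(p (u, v) * Real.logb 2 (p (u, v))) else 0) := by
    intro v i
    refine le_trans (coarsen_logb Finset.univ _ (fun u _ => hbnn v i u)) (le_of_eq ?_)
    exact Finset.sum_congr rfl fun u _ => by by_cases h : blkU u = i <;> simp [h]
  calc -∑ v : V, ∑ i : I, (∑ u : U, if blkU u = i then p (u, v) else 0) *
          Real.logb 2 (∑ u : U, if blkU u = i then p (u, v) else 0)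
      = ∑ v : V, ∑ i : I, -((∑ u : U, if blkU u = i then p (u, v) else 0) *
          Real.logb 2 (∑ u : U, if blkU u = i then p (u, v) else 0)) := by
        simp [Finset.sum_neg_distrib]
    _ ≤ ∑ v : V, ∑ i : I, ∑ u : U,
          (if blkU u = i then -(p (u, v) * Real.logb 2 (p (u, v))) else 0) :=
        Finset.sum_le_sum fun v _ => Finset.sum_le_sum fun i _ => step v i
    _ = ∑ v : V, ∑ u : U, -(p (u, v) * Real.logb 2 (p (u, v))) := by
        refine Finset.sum_congr rfl fun v _ => ?_
        rw [Finset.sum_comm]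
        exact Finset.sum_congr rfl fun u _ => by simp [Finset.sum_ite_eq]
    _ = -∑ x : U × V, p x * Real.logb 2 (p x) := by
        rw [Fintype.sum_prod_type, Finset.sum_comm]
        simp [Finset.sum_neg_distrib]

private lemma blockQ_eq_v {U V I J : Type*} [Fintype U] [Fintype V] [DecidableEq I]
    [DecidableEq J] (p : U × V → ℝ) (blkU : U → I) (blkV : V → J) (i : I) (j : J) :
    blockProb p (fun x => (blkU x.1, blkV x.2)) (i, j) =
      ∑ v : V, if blkV v = j then (∑ u : U, if blkU u = i then p (u, v) else 0) else 0 := by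
  rw [blockProb, Fintype.sum_prod_type, Finset.sum_comm]
  refine Finset.sum_congr rfl fun v _ => ?_
  by_cases h : blkV v = j <;> simp [h, Prod.ext_iff]

private lemma blockQ_eq_u {U V I J : Type*} [Fintype U] [Fintype V] [DecidableEq I]
    [DecidableEq J] (p : U × V → ℝ) (blkU : U → I) (blkV : V → J) (i : I) (j : J) :
    blockProb p (fun x => (blkU x.1, blkV x.2)) (i, j) =
      ∑ u : U, if blkU u = i then (∑ v : V, if blkV v = j then p (u, v) else 0) else 0 := by
  rw [blockProb, Fintype.sum_prod_type]
  refine Finset.sum_congr rfl fun u _ => ?_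
  by_cases h : blkU u = i <;> simp [h, Prod.ext_iff]

private lemma ineq2 {U V I J : Type*} [Fintype U] [Fintype V] [Fintype I] [Fintype J]
    [DecidableEq I] [DecidableEq J]
    (p : U × V → ℝ) (blkU : U → I) (blkV : V → J) (hp : ∀ x, 0 ≤ p x) :
    semEntropy p (fun x => (blkU x.1, blkV x.2)) ≤
      shannonEntropy (fun v => ∑ u : U, p (u, v)) +
        condSemEntropy (fun x : V × U => p (x.2, x.1)) blkU := by
  classical
  have hbnn : ∀ (v : V) (i : I), 0 ≤ ∑ u : U, (if blkU u = i then p (u, v) else 0) :=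
    fun v i => Finset.sum_nonneg fun u _ => by
      by_cases h : blkU u = i <;> simp [h, hp (u, v)]
  have hbv : ∀ v : V, ∑ i : I, (∑ u : U, if blkU u = i then p (u, v) else 0)
      = ∑ u : U, p (u, v) := by
    intro v
    rw [Finset.sum_comm]
    exact Finset.sum_congr rfl fun u _ => by simp [Finset.sum_ite_eq]
  have hid := cond_identity (fun v => ∑ u : U, p (u, v))
      (fun v i => ∑ u : U, if blkU u = i then p (u, v) else 0)
      (fun v i => hbnn v i) hbv
  simp only [shannonEntropy, condSemEntropy]
  rw [hid, semEntropy, Fintype.sum_prod_type]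
  have step : ∀ (i : I) (j : J),
      -(blockProb p (fun x => (blkU x.1, blkV x.2)) (i, j) *
          Real.logb 2 (blockProb p (fun x => (blkU x.1, blkV x.2)) (i, j))) ≤
        ∑ v : V, (if blkV v = j then
          -((∑ u : U, if blkU u = i then p (u, v) else 0) *
            Real.logb 2 (∑ u : U, if blkU u = i then p (u, v) else 0)) else 0) := by
    intro i j
    rw [blockQ_eq_v p blkU blkV i j]
    refine le_trans (coarsen_logb Finset.univ _ (fun v _ => ?_)) (le_of_eq ?_)
    · by_cases h : blkV v = j <;> simp [h, hbnn v i]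
    · exact Finset.sum_congr rfl fun v _ => by by_cases h : blkV v = j <;> simp [h]
  calc -∑ i : I, ∑ j : J, blockProb p (fun x => (blkU x.1, blkV x.2)) (i, j) *
          Real.logb 2 (blockProb p (fun x => (blkU x.1, blkV x.2)) (i, j))
      = ∑ i : I, ∑ j : J, -(blockProb p (fun x => (blkU x.1, blkV x.2)) (i, j) *
          Real.logb 2 (blockProb p (fun x => (blkU x.1, blkV x.2)) (i, j))) := by
        simp [Finset.sum_neg_distrib]
    _ ≤ ∑ i : I, ∑ j : J, ∑ v : V, (if blkV v = j then
          -((∑ u : U, if blkU u = i then p (u, v) else 0) *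
            Real.logb 2 (∑ u : U, if blkU u = i then p (u, v) else 0)) else 0) :=
        Finset.sum_le_sum fun i _ => Finset.sum_le_sum fun j _ => step i j
    _ = ∑ i : I, ∑ v : V, -((∑ u : U, if blkU u = i then p (u, v) else 0) *
            Real.logb 2 (∑ u : U, if blkU u = i then p (u, v) else 0)) := by
        refine Finset.sum_congr rfl fun i _ => ?_
        rw [Finset.sum_comm]
        exact Finset.sum_congr rfl fun v _ => by simp [Finset.sum_ite_eq]
    _ = -∑ v : V, ∑ i : I, (∑ u : U, if blkU u = i then p (u, v) else 0) *
            Real.logb 2 (∑ u : U, if blkU u = i then p (u, v) else 0) := by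
        rw [Finset.sum_comm]
        simp [Finset.sum_neg_distrib]

private lemma ineq1 {U V I J : Type*} [Fintype U] [Fintype V] [Fintype I] [Fintype J]
    [DecidableEq I] [DecidableEq J]
    (p : U × V → ℝ) (blkU : U → I) (blkV : V → J) (hp : ∀ x, 0 ≤ p x) :
    semEntropy (fun u => ∑ v : V, p (u, v)) blkU + condSemEntropy p blkV ≤
      semEntropy p (fun x => (blkU x.1, blkV x.2)) := by
  classical
  -- abbreviations only in proofs
  have hann : ∀ (u : U) (j : J), 0 ≤ ∑ v : V, (if blkV v = j then p (u, v) else 0) :=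
    fun u j => Finset.sum_nonneg fun v _ => by
      by_cases h : blkV v = j <;> simp [h, hp (u, v)]
  have hpUnn : ∀ u : U, 0 ≤ ∑ v : V, p (u, v) :=
    fun u => Finset.sum_nonneg fun v _ => hp (u, v)
  have hapU : ∀ (u : U) (j : J),
      (∑ v : V, if blkV v = j then p (u, v) else 0) ≤ ∑ v : V, p (u, v) := by
    intro u j
    refine Finset.sum_le_sum fun v _ => ?_
    by_cases h : blkV v = j <;> simp [h, hp (u, v)]
  have hpUa : ∀ u : U, ∑ v : V, p (u, v)
      = ∑ j : J, ∑ v : V, (if blkV v = j then p (u, v) else 0) := by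
    intro u
    rw [Finset.sum_comm]
    exact Finset.sum_congr rfl fun v _ => by simp [Finset.sum_ite_eq]
  have hQnn : ∀ (i : I) (j : J), 0 ≤ blockProb p (fun x => (blkU x.1, blkV x.2)) (i, j) := by
    intro i j
    rw [blockQ_eq_u p blkU blkV i j]
    refine Finset.sum_nonneg fun u _ => ?_
    by_cases h : blkU u = i <;> simp [h, hann u j]
  have hPQ : ∀ i : I, blockProb (fun u => ∑ v : V, p (u, v)) blkU i
      = ∑ j : J, blockProb p (fun x => (blkU x.1, blkV x.2)) (i, j) := by
    intro i
    rw [blockProb]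
    have hsplit : ∀ u : U, (if blkU u = i then ∑ v : V, p (u, v) else 0)
        = ∑ j : J, (if blkU u = i then (∑ v : V, if blkV v = j then p (u, v) else 0) else 0) := by
      intro u
      by_cases h : blkU u = i
      · simp only [h, if_true]; exact hpUa u
      · simp [h]
    calc ∑ u : U, (if blkU u = i then ∑ v : V, p (u, v) else 0)
        = ∑ u : U, ∑ j : J,
            (if blkU u = i then (∑ v : V, if blkV v = j then p (u, v) else 0) else 0) :=
          Finset.sum_congr rfl fun u _ => hsplit u
      _ = ∑ j : J, ∑ u : U,
            (if blkU u = i then (∑ v : V, if blkV v = j then p (u, v) else 0) else 0) :=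
          Finset.sum_comm
      _ = ∑ j : J, blockProb p (fun x => (blkU x.1, blkV x.2)) (i, j) :=
          Finset.sum_congr rfl fun j _ => (blockQ_eq_u p blkU blkV i j).symm
  -- log-sum step
  have step : ∀ (i : I) (j : J),
      blockProb p (fun x => (blkU x.1, blkV x.2)) (i, j) *
        Real.logb 2 (blockProb p (fun x => (blkU x.1, blkV x.2)) (i, j) /
          blockProb (fun u => ∑ v : V, p (u, v)) blkU i) ≤
      ∑ u : U, (if blkU u = i then
        (∑ v : V, if blkV v = j then p (u, v) else 0) *
          Real.logb 2 ((∑ v : V, if blkV v = j then p (u, v) else 0) /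
            (∑ v : V, p (u, v))) else 0) := by
    intro i j
    rw [blockQ_eq_u p blkU blkV i j, blockProb]
    refine le_trans (log_sum_logb Finset.univ
        (fun u => if blkU u = i then (∑ v : V, if blkV v = j then p (u, v) else 0) else 0)
        (fun u => if blkU u = i then (∑ v : V, p (u, v)) else 0)
        (fun u _ => by by_cases h : blkU u = i <;> simp [h, hann u j])
        (fun u _ => by by_cases h : blkU u = i <;> simp [h, hpUnn u])
        (fun u _ hne => ?_)) (le_of_eq ?_)
    · by_cases h : blkU u = i
      · simp only [h, if_true] at hne ⊢
        exact lt_of_lt_of_le (lt_of_le_of_ne (hann u j) (Ne.symm hne)) (hapU u j)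
      · simp [h] at hne
    · exact Finset.sum_congr rfl fun u _ => by by_cases h : blkU u = i <;> simp [h]
  -- identity step
  have ident : ∀ i : I,
      ∑ j : J, blockProb p (fun x => (blkU x.1, blkV x.2)) (i, j) *
        Real.logb 2 (blockProb p (fun x => (blkU x.1, blkV x.2)) (i, j) /
          blockProb (fun u => ∑ v : V, p (u, v)) blkU i)
      = (∑ j : J, blockProb p (fun x => (blkU x.1, blkV x.2)) (i, j) *
          Real.logb 2 (blockProb p (fun x => (blkU x.1, blkV x.2)) (i, j)))
        - blockProb (fun u => ∑ v : V, p (u, v)) blkU i *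
            Real.logb 2 (blockProb (fun u => ∑ v : V, p (u, v)) blkU i) := by
    intro i
    have hterm : ∀ j : J, blockProb p (fun x => (blkU x.1, blkV x.2)) (i, j) *
        Real.logb 2 (blockProb p (fun x => (blkU x.1, blkV x.2)) (i, j) /
          blockProb (fun u => ∑ v : V, p (u, v)) blkU i)
        = blockProb p (fun x => (blkU x.1, blkV x.2)) (i, j) *
            Real.logb 2 (blockProb p (fun x => (blkU x.1, blkV x.2)) (i, j))
          - blockProb p (fun x => (blkU x.1, blkV x.2)) (i, j) *
            Real.logb 2 (blockProb (fun u => ∑ v : V, p (u, v)) blkU i) := by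
      intro j
      rcases eq_or_lt_of_le (hQnn i j) with h0 | h0
      · simp [← h0]
      · have hPpos : 0 < blockProb (fun u => ∑ v : V, p (u, v)) blkU i := by
          rw [hPQ i]
          exact lt_of_lt_of_le h0
            (Finset.single_le_sum (fun j _ => hQnn i j) (Finset.mem_univ j))
        rw [Real.logb_div h0.ne' hPpos.ne', mul_sub]
    rw [Finset.sum_congr rfl (fun j _ => hterm j), Finset.sum_sub_distrib,
      ← Finset.sum_mul, ← hPQ i]
  -- main inequality between double sums
  have main : ∑ i : I, ∑ j : J, blockProb p (fun x => (blkU x.1, blkV x.2)) (i, j) *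
        Real.logb 2 (blockProb p (fun x => (blkU x.1, blkV x.2)) (i, j) /
          blockProb (fun u => ∑ v : V, p (u, v)) blkU i) ≤
      ∑ u : U, ∑ j : J, (∑ v : V, if blkV v = j then p (u, v) else 0) *
        Real.logb 2 ((∑ v : V, if blkV v = j then p (u, v) else 0) /
          (∑ v : V, p (u, v))) := by
    refine le_trans (Finset.sum_le_sum fun i _ => Finset.sum_le_sum fun j _ => step i j)
      (le_of_eq ?_)
    rw [Finset.sum_comm]
    refine (Finset.sum_congr rfl fun j _ => ?_).trans (Finset.sum_comm)
    rw [Finset.sum_comm]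
    exact Finset.sum_congr rfl fun u _ => by simp [Finset.sum_ite_eq]
  have ident' : ∑ i : I, ∑ j : J, blockProb p (fun x => (blkU x.1, blkV x.2)) (i, j) *
        Real.logb 2 (blockProb p (fun x => (blkU x.1, blkV x.2)) (i, j) /
          blockProb (fun u => ∑ v : V, p (u, v)) blkU i)
      = (∑ i : I, ∑ j : J, blockProb p (fun x => (blkU x.1, blkV x.2)) (i, j) *
          Real.logb 2 (blockProb p (fun x => (blkU x.1, blkV x.2)) (i, j)))
        - ∑ i : I, blockProb (fun u => ∑ v : V, p (u, v)) blkU i *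
            Real.logb 2 (blockProb (fun u => ∑ v : V, p (u, v)) blkU i) := by
    rw [Finset.sum_congr rfl (fun i _ => ident i), Finset.sum_sub_distrib]
  simp only [semEntropy, condSemEntropy]
  rw [Fintype.sum_prod_type]
  linarith [main, ident']


/-- Chain rule inequalities for semantic entropies with two variables:
`H_s(Ũ) + H_s(Ṽ|U) ≤ H_s(Ũ,Ṽ) ≤ H(V) + H_s(Ũ|V) ≤ H(U,V)`. -/
theorem semEntropy_chain_rule
    {U V I J : Type*} [Fintype U] [Fintype V] [Fintype I] [Fintype J]
    [DecidableEq I] [DecidableEq J]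
    (p : U × V → ℝ) (blkU : U → I) (blkV : V → J)
    (hp : ∀ x, 0 ≤ p x) (hsum : ∑ x, p x = 1) :
    semEntropy (fun u => ∑ v : V, p (u, v)) blkU + condSemEntropy p blkV ≤
        semEntropy p (fun x => (blkU x.1, blkV x.2)) ∧
      semEntropy p (fun x => (blkU x.1, blkV x.2)) ≤
        shannonEntropy (fun v => ∑ u : U, p (u, v)) +
          condSemEntropy (fun x : V × U => p (x.2, x.1)) blkU ∧
      shannonEntropy (fun v => ∑ u : U, p (u, v)) +
          condSemEntropy (fun x : V × U => p (x.2, x.1)) blkU ≤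
        shannonEntropy p :=
  ⟨ineq1 p blkU blkV hp, ineq2 p blkU blkV hp, ineq3 p blkU hp⟩
end

section
/- Ordering of mutual information measures: I_s(Ũ;Ṽ) ≤ I(U;V) ≤ H(V) − H_s(Ṽ|U) ≤ I^s(Ũ;Ṽ), where I_s(Ũ;Ṽ) = H_s(Ũ)+H_s(Ṽ)−H(U,V) and I^s(Ũ;Ṽ) = H(U)+H(V)−H_s(Ũ,Ṽ). -/
open Finset

/- ### Auxiliary lemmas -/

lemma mul_logb_div_eq (a b : ℝ) (ha : 0 ≤ a) (hab : a ≤ b) :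
    a * Real.logb 2 (a / b) = a * Real.logb 2 a - a * Real.logb 2 b := by
  rcases ha.eq_or_lt with h | h
  · simp [← h]
  · have hb : 0 < b := lt_of_lt_of_le h hab
    rw [Real.logb_div h.ne' hb.ne', mul_sub]

lemma mul_logb_le_of_le (a c : ℝ) (ha : 0 ≤ a) (hac : a ≤ c) :
    a * Real.logb 2 a ≤ a * Real.logb 2 c := by
  rcases ha.eq_or_lt with h | h
  · simp [← h]
  · exact mul_le_mul_of_nonneg_left
      (Real.logb_le_logb_of_le (by norm_num) h hac) ha

lemma mul_logb_div_le_div (a c b : ℝ) (ha : 0 ≤ a) (hac : a ≤ c) (hab : a ≤ b) :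
    a * Real.logb 2 (a / b) ≤ a * Real.logb 2 (c / b) := by
  rcases ha.eq_or_lt with h | h
  · simp [← h]
  · have hb : 0 < b := lt_of_lt_of_le h hab
    exact mul_le_mul_of_nonneg_left
      (Real.logb_le_logb_of_le (by norm_num) (div_pos h hb)
        (div_le_div_of_nonneg_right hac hb.le)) ha

lemma sum_blockProb_mul {U B : Type*} [Fintype U] [Fintype B] [DecidableEq B]
    (p : U → ℝ) (blk : U → B) (f : B → ℝ) :
    ∑ i : B, blockProb p blk i * f i = ∑ u : U, p u * f (blk u) := by
  unfold blockProb
  simp_rw [Finset.sum_mul, ite_mul, zero_mul]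
  rw [Finset.sum_comm]
  simp

lemma le_blockProb {U B : Type*} [Fintype U] [DecidableEq B]
    (p : U → ℝ) (blk : U → B) (hp : ∀ u, 0 ≤ p u) (u : U) :
    p u ≤ blockProb p blk (blk u) := by
  have h := Finset.single_le_sum
    (f := fun u' => if blk u' = blk u then p u' else 0)
    (fun i _ => by split <;> [exact hp i; exact le_rfl]) (Finset.mem_univ u)
  simpa [blockProb] using h

lemma semEntropy_le_shannonEntropy {U B : Type*} [Fintype U] [Fintype B] [DecidableEq B]
    (p : U → ℝ) (blk : U → B) (hp : ∀ u, 0 ≤ p u) :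
    semEntropy p blk ≤ shannonEntropy p := by
  unfold semEntropy shannonEntropy
  rw [sum_blockProb_mul p blk (fun i => Real.logb 2 (blockProb p blk i))]
  apply neg_le_neg
  exact Finset.sum_le_sum fun u _ =>
    mul_logb_le_of_le _ _ (hp u) (le_blockProb p blk hp u)

/-- Ordering of mutual information measures:
`I_s(Ũ;Ṽ) ≤ I(U;V) ≤ H(V) − H_s(Ṽ|U) ≤ I^s(Ũ;Ṽ)`, where
`I_s(Ũ;Ṽ) = H_s(Ũ) + H_s(Ṽ) − H(U,V)` and `I^s(Ũ;Ṽ) = H(U) + H(V) − H_s(Ũ,Ṽ)`. -/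
theorem mutualInfo_ordering
    {U V I J : Type*} [Fintype U] [Fintype V] [Fintype I] [Fintype J]
    [DecidableEq I] [DecidableEq J]
    (p : U × V → ℝ) (blkU : U → I) (blkV : V → J)
    (hp : ∀ x, 0 ≤ p x) (hsum : ∑ x, p x = 1) :
    semEntropy (fun u => ∑ v : V, p (u, v)) blkU +
        semEntropy (fun v => ∑ u : U, p (u, v)) blkV - shannonEntropy p ≤
      shannonEntropy (fun u => ∑ v : V, p (u, v)) +
        shannonEntropy (fun v => ∑ u : U, p (u, v)) - shannonEntropy p ∧
    shannonEntropy (fun u => ∑ v : V, p (u, v)) +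
        shannonEntropy (fun v => ∑ u : U, p (u, v)) - shannonEntropy p ≤
      shannonEntropy (fun v => ∑ u : U, p (u, v)) - condSemEntropy p blkV ∧
    shannonEntropy (fun v => ∑ u : U, p (u, v)) - condSemEntropy p blkV ≤
      shannonEntropy (fun u => ∑ v : V, p (u, v)) +
        shannonEntropy (fun v => ∑ u : U, p (u, v)) -
        semEntropy p (fun x => (blkU x.1, blkV x.2)) := by
  classical
  set pU : U → ℝ := fun u => ∑ v : V, p (u, v) with hpUdef
  set pV : V → ℝ := fun v => ∑ u : U, p (u, v) with hpVdef
  set Q : U × J → ℝ := fun x => ∑ v : V, if blkV v = x.2 then p (x.1, v) else 0 with hQdef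
  have hpU : ∀ u, 0 ≤ pU u := fun u => Finset.sum_nonneg fun v _ => hp _
  have hpV : ∀ v, 0 ≤ pV v := fun v => Finset.sum_nonneg fun u _ => hp _
  have hQ : ∀ x, 0 ≤ Q x := fun x =>
    Finset.sum_nonneg fun v _ => by split <;> simp [hp _]
  have hQle : ∀ u j, Q (u, j) ≤ pU u := fun u j =>
    Finset.sum_le_sum fun v _ => by split <;> simp [hp _]
  have hple : ∀ u v, p (u, v) ≤ pU u := fun u v =>
    Finset.single_le_sum (fun v' _ => hp (u, v')) (Finset.mem_univ v)
  -- blockProb of conditional slice is Q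
  have hBPQ : ∀ u j, blockProb (fun v => p (u, v)) blkV j = Q (u, j) := fun u j => rfl
  -- conditional semantic entropy rewritten as a sum over (u,v)
  have hcond : condSemEntropy p blkV
      = -∑ u : U, ∑ v : V, p (u, v) * Real.logb 2 (Q (u, blkV v) / pU u) := by
    unfold condSemEntropy
    congr 1
    refine Finset.sum_congr rfl fun u _ => ?_
    have := sum_blockProb_mul (fun v => p (u, v)) blkV
      (fun j => Real.logb 2 (Q (u, j) / pU u))
    simpa [blockProb, hQdef, hpUdef] using this
  -- H(U,V) - H(U) as a sum over (u,v)
  have hHmarg : shannonEntropy p - shannonEntropy pU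
      = -∑ u : U, ∑ v : V, p (u, v) * Real.logb 2 (p (u, v) / pU u) := by
    unfold shannonEntropy
    rw [Fintype.sum_prod_type]
    have : ∀ u : U, ∑ v : V, p (u, v) * Real.logb 2 (p (u, v) / pU u)
        = (∑ v : V, p (u, v) * Real.logb 2 (p (u, v))) - pU u * Real.logb 2 (pU u) := by
      intro u
      have h1 : ∀ v : V, p (u, v) * Real.logb 2 (p (u, v) / pU u)
          = p (u, v) * Real.logb 2 (p (u, v)) - p (u, v) * Real.logb 2 (pU u) :=
        fun v => mul_logb_div_eq _ _ (hp _) (hple u v)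
      simp_rw [h1, Finset.sum_sub_distrib, ← Finset.sum_mul]
      rfl
    simp_rw [this, Finset.sum_sub_distrib]
    ring
  -- Inequality 2 core : condSem ≤ H(U,V) - H(U)
  have hIneq2 : condSemEntropy p blkV ≤ shannonEntropy p - shannonEntropy pU := by
    rw [hcond, hHmarg, neg_le_neg_iff]
    refine Finset.sum_le_sum fun u _ => Finset.sum_le_sum fun v _ => ?_
    refine mul_logb_div_le_div _ _ _ (hp _) ?_ (hple u v)
    have h := Finset.single_le_sum
      (f := fun v' => if blkV v' = blkV v then p (u, v') else 0)
      (fun v' _ => by split <;> [exact hp _; exact le_rfl]) (Finset.mem_univ v)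
    simpa [hQdef] using h
  -- sum of Q over j at fixed u is pU u
  have hQsum : ∀ u, ∑ j : J, Q (u, j) = pU u := by
    intro u
    rw [hpUdef]
    dsimp only [hQdef]
    rw [Finset.sum_comm]
    simp
  -- H(U) + condSem = H(Q)  (entropy of refined joint on U × J)
  have hHQ : shannonEntropy pU + condSemEntropy p blkV = shannonEntropy Q := by
    unfold condSemEntropy shannonEntropy
    rw [Fintype.sum_prod_type]
    have : ∀ u : U, ∑ j : J, Q (u, j) * Real.logb 2 (Q (u, j) / pU u)
        = (∑ j : J, Q (u, j) * Real.logb 2 (Q (u, j))) - pU u * Real.logb 2 (pU u) := by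
      intro u
      have h1 : ∀ j : J, Q (u, j) * Real.logb 2 (Q (u, j) / pU u)
          = Q (u, j) * Real.logb 2 (Q (u, j)) - Q (u, j) * Real.logb 2 (pU u) :=
        fun j => mul_logb_div_eq _ _ (hQ _) (hQle u j)
      simp_rw [h1, Finset.sum_sub_distrib, ← Finset.sum_mul, hQsum u]
    have hform : (∑ u : U, ∑ j : J,
        (∑ v : V, if blkV v = j then p (u, v) else 0) *
          Real.logb 2 ((∑ v : V, if blkV v = j then p (u, v) else 0) / (∑ v : V, p (u, v))))
        = ∑ u : U, ∑ j : J, Q (u, j) * Real.logb 2 (Q (u, j) / pU u) := rfl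
    rw [hform]
    simp_rw [this, Finset.sum_sub_distrib]
    ring
  -- block probabilities of the product partition agree with those of Q refined by blkU
  have hBP : ∀ ij : I × J, blockProb p (fun x => (blkU x.1, blkV x.2)) ij
      = blockProb Q (fun y => (blkU y.1, y.2)) ij := by
    rintro ⟨i, j⟩
    unfold blockProb
    rw [Fintype.sum_prod_type, Fintype.sum_prod_type]
    refine Finset.sum_congr rfl fun u _ => ?_
    have hl : ∀ v : V, (if (blkU u, blkV v) = (i, j) then p (u, v) else 0)
        = if blkU u = i then (if blkV v = j then p (u, v) else 0) else 0 := by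
      intro v
      by_cases h1 : blkU u = i <;> by_cases h2 : blkV v = j <;> simp [h1, h2, Prod.ext_iff]
    have hr : ∀ j' : J, (if (blkU u, j') = (i, j) then Q (u, j') else 0)
        = if j' = j then (if blkU u = i then Q (u, j') else 0) else 0 := by
      intro j'
      by_cases h1 : blkU u = i <;> by_cases h2 : j' = j <;> simp [h1, h2, Prod.ext_iff]
    simp_rw [hl, hr]
    rw [Finset.sum_ite_eq' Finset.univ j (fun j' => if blkU u = i then Q (u, j') else 0)]
    by_cases h1 : blkU u = i <;> simp [h1, hQdef]
  have hsemeq : semEntropy p (fun x => (blkU x.1, blkV x.2))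
      = semEntropy Q (fun y => (blkU y.1, y.2)) := by
    unfold semEntropy
    congr 1
    exact Finset.sum_congr rfl fun ij _ => by rw [hBP ij]
  -- Inequality 3 core
  have hIneq3 : semEntropy p (fun x => (blkU x.1, blkV x.2))
      ≤ shannonEntropy pU + condSemEntropy p blkV := by
    rw [hsemeq, hHQ]
    exact semEntropy_le_shannonEntropy Q _ hQ
  refine ⟨?_, ?_, ?_⟩
  · have h1 := semEntropy_le_shannonEntropy pU blkU hpU
    have h2 := semEntropy_le_shannonEntropy pV blkV hpV
    simp only [hpUdef, hpVdef] at h1 h2 ⊢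
    linarith
  · simp only [hpUdef, hpVdef] at hIneq2 ⊢
    linarith
  · simp only [hpUdef, hpVdef] at hIneq3 ⊢
    linarith
end

section
/- The full semantic mutual information sits between down and up semantic mutual information: I_s(Ũ;Ṽ) ≤ Ĩ_s(Ũ;Ṽ) ≤ H(V) − H_s(Ṽ|U) ≤ I^s(Ũ;Ṽ). -/
open Finset

section helpers
variable {X B C : Type*} [Fintype X] [Fintype B] [Fintype C] [DecidableEq B] [DecidableEq C]

lemma blockProb_nonneg (q : X → ℝ) (f : X → B) (hq : ∀ x, 0 ≤ q x) (i : B) :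
    0 ≤ blockProb q f i :=
  Finset.sum_nonneg fun x _ => by by_cases h : f x = i <;> simp [blockProb, h, hq x]

lemma le_blockProb_s13 (q : X → ℝ) (f : X → B) (hq : ∀ x, 0 ≤ q x) (x : X) :
    q x ≤ blockProb q f (f x) := by
  have := Finset.single_le_sum (f := fun u => if f u = f x then q u else 0)
    (fun u _ => by by_cases h : f u = f x <;> simp [h, hq u]) (Finset.mem_univ x)
  simpa [blockProb] using this

/-- Key rewriting: a sum against block probabilities equals a sum over points. -/
lemma sum_block (q : X → ℝ) (f : X → B) (L : B → ℝ) :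
    ∑ i : B, blockProb q f i * L i = ∑ x : X, q x * L (f x) := by
  simp only [blockProb, Finset.sum_mul, ite_mul, zero_mul]
  rw [Finset.sum_comm]
  congr 1; ext x
  simp

set_option linter.unusedSectionVars false

lemma semEntropy_eq_sum (q : X → ℝ) (f : X → B) :
    semEntropy q f = -∑ x : X, q x * Real.logb 2 (blockProb q f (f x)) := by
  rw [semEntropy, sum_block]

/-- Grouping decreases entropy. -/
lemma semEntropy_le_shannonEntropy_s13 (q : X → ℝ) (f : X → B) (hq : ∀ x, 0 ≤ q x) :
    semEntropy q f ≤ shannonEntropy q := by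
  rw [semEntropy_eq_sum, shannonEntropy, neg_le_neg_iff]
  refine Finset.sum_le_sum fun x _ => ?_
  rcases eq_or_lt_of_le (hq x) with h | h
  · simp [← h]
  · exact mul_le_mul_of_nonneg_left
      (Real.logb_le_logb_of_le one_lt_two h (le_blockProb_s13 q f hq x)) (hq x)

lemma blockProb_comp (q : X → ℝ) (f : X → B) (h : B → C) (k : C) :
    blockProb q (fun x => h (f x)) k = blockProb (blockProb q f) h k := by
  have := sum_block q f (fun b => if h b = k then 1 else 0)
  simp only [mul_ite, mul_one, mul_zero] at this
  rw [blockProb, blockProb, ← this]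

lemma shannonEntropy_blockProb (q : X → ℝ) (f : X → B) :
    shannonEntropy (blockProb q f) = semEntropy q f := rfl

/-- Coarser partition has smaller entropy. -/
lemma semEntropy_comp_le (q : X → ℝ) (f : X → B) (h : B → C) (hq : ∀ x, 0 ≤ q x) :
    semEntropy q (fun x => h (f x)) ≤ semEntropy q f := by
  have e : semEntropy q (fun x => h (f x)) = semEntropy (blockProb q f) h := by
    unfold semEntropy
    congr 1
    exact Finset.sum_congr rfl fun i _ => by rw [blockProb_comp]
  rw [e, ← shannonEntropy_blockProb q f]
  exact semEntropy_le_shannonEntropy_s13 _ _ (blockProb_nonneg q f hq)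

/-- Chain-rule style identity: `∑ c log c = (∑c) log(∑c) + ∑ c log(c/∑c)`. -/
lemma split_entropy {J : Type*} [Fintype J] (c : J → ℝ) (hc : ∀ j, 0 ≤ c j) :
    ∑ j : J, c j * Real.logb 2 (c j) =
      (∑ j : J, c j) * Real.logb 2 (∑ j : J, c j) +
        ∑ j : J, c j * Real.logb 2 (c j / (∑ j : J, c j)) := by
  set t := ∑ j : J, c j with ht
  have key : ∀ j : J, c j * Real.logb 2 (c j) - c j * Real.logb 2 (c j / t)
      = c j * Real.logb 2 t := by
    intro j
    rcases eq_or_lt_of_le (hc j) with h | h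
    · simp [← h]
    · have htpos : 0 < t := lt_of_lt_of_le h
        (Finset.single_le_sum (fun i _ => hc i) (Finset.mem_univ j))
      rw [Real.logb_div h.ne' htpos.ne']
      ring
  have : ∑ j : J, (c j * Real.logb 2 (c j) - c j * Real.logb 2 (c j / t))
      = ∑ j : J, c j * Real.logb 2 t := Finset.sum_congr rfl fun j _ => key j
  rw [Finset.sum_sub_distrib, ← Finset.sum_mul] at this
  linarith

/-- Log-sum inequality (base 2). -/
lemma logsum {ι : Type*} (s : Finset ι) (a b : ι → ℝ)
    (ha : ∀ i ∈ s, 0 ≤ a i) (hab : ∀ i ∈ s, a i ≤ b i) :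
    (∑ i ∈ s, a i) * Real.logb 2 ((∑ i ∈ s, a i) / (∑ i ∈ s, b i)) ≤
      ∑ i ∈ s, a i * Real.logb 2 (a i / b i) := by
  have hb : ∀ i ∈ s, 0 ≤ b i := fun i hi => (ha i hi).trans (hab i hi)
  set A := ∑ i ∈ s, a i with hA
  set B := ∑ i ∈ s, b i with hB
  have hA0 : 0 ≤ A := Finset.sum_nonneg ha
  have hB0 : 0 ≤ B := Finset.sum_nonneg hb
  rcases eq_or_lt_of_le hB0 with hBz | hBpos
  · -- B = 0 hence all b = 0, all a = 0
    have hbz : ∀ i ∈ s, b i = 0 := by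
      intro i hi
      exact le_antisymm (by
        have := (Finset.sum_eq_zero_iff_of_nonneg hb).mp hBz.symm
        exact (this i hi).le) (hb i hi)
    have haz : ∀ i ∈ s, a i = 0 := fun i hi =>
      le_antisymm ((hab i hi).trans (hbz i hi).le) (ha i hi)
    have : A = 0 := Finset.sum_eq_zero haz
    rw [this, zero_mul]
    exact le_of_eq (Finset.sum_eq_zero fun i hi => by rw [haz i hi, zero_mul]).symm
  · rcases eq_or_lt_of_le hA0 with hAz | hApos
    · rw [← hAz, zero_mul]
      refine Finset.sum_nonneg fun i hi => ?_
      have : a i = 0 := le_antisymm (by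
        have := (Finset.sum_eq_zero_iff_of_nonneg ha).mp hAz.symm
        exact (this i hi).le) (ha i hi)
      simp [this]
    · -- Jensen with f(x) = x * log x, weights b i / B
      have hlog2 : (0:ℝ) < Real.log 2 := Real.log_pos one_lt_two
      have jensen := Real.convexOn_mul_log.map_sum_le (t := s)
        (w := fun i => b i / B) (p := fun i => a i / b i)
        (fun i hi => div_nonneg (hb i hi) hB0)
        (by rw [← Finset.sum_div, ← hB, div_self hBpos.ne'])
        (fun i hi => Set.mem_Ici.mpr (div_nonneg (ha i hi) (hb i hi)))
      simp only [smul_eq_mul] at jensen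
      have e1 : ∑ i ∈ s, b i / B * (a i / b i) = A / B := by
        have step : ∀ i ∈ s, b i / B * (a i / b i) = a i / B := by
          intro i hi
          rcases eq_or_lt_of_le (hb i hi) with h | h
          · have haz : a i = 0 := le_antisymm (by rw [h]; exact hab i hi) (ha i hi)
            rw [haz, ← h]; simp
          · field_simp
        rw [Finset.sum_congr rfl step, ← Finset.sum_div]
      rw [e1] at jensen
      have jensen2 := mul_le_mul_of_nonneg_left jensen hB0
      have e2 : B * (A / B * Real.log (A / B)) = A * Real.log (A / B) := by
        field_simp
      have e3 : B * ∑ i ∈ s, b i / B * (a i / b i * Real.log (a i / b i))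
          = ∑ i ∈ s, a i * Real.log (a i / b i) := by
        rw [Finset.mul_sum]
        refine Finset.sum_congr rfl fun i hi => ?_
        rcases eq_or_lt_of_le (hb i hi) with h | h
        · have haz : a i = 0 := le_antisymm (by rw [h]; exact hab i hi) (ha i hi)
          rw [haz, ← h]; simp
        · field_simp
      rw [e2, e3] at jensen2
      -- convert natural log to logb 2
      simp only [Real.logb, mul_div_assoc'] at *
      rw [← Finset.sum_div, div_le_div_iff_of_pos_right hlog2]
      exact jensen2

end helpers


/-- The full semantic mutual information sits between the down and up semantic
mutual information: `I_s(Ũ;Ṽ) ≤ Ĩ_s(Ũ;Ṽ) ≤ H(V) − H_s(Ṽ|U) ≤ I^s(Ũ;Ṽ)`. -/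
theorem fullSemMutualInfo_between
    {U V I J : Type*} [Fintype U] [Fintype V] [Fintype I] [Fintype J]
    [DecidableEq I] [DecidableEq J]
    (p : U × V → ℝ) (blkU : U → I) (blkV : V → J)
    (hp : ∀ x, 0 ≤ p x) (hsum : ∑ x, p x = 1) :
    semEntropy (fun u => ∑ v : V, p (u, v)) blkU +
        semEntropy (fun v => ∑ u : U, p (u, v)) blkV - shannonEntropy p ≤
      semEntropy (fun u => ∑ v : V, p (u, v)) blkU +
        semEntropy (fun v => ∑ u : U, p (u, v)) blkV -
        semEntropy p (fun x => (blkU x.1, blkV x.2)) ∧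
    semEntropy (fun u => ∑ v : V, p (u, v)) blkU +
        semEntropy (fun v => ∑ u : U, p (u, v)) blkV -
        semEntropy p (fun x => (blkU x.1, blkV x.2)) ≤
      shannonEntropy (fun v => ∑ u : U, p (u, v)) - condSemEntropy p blkV ∧
    shannonEntropy (fun v => ∑ u : U, p (u, v)) - condSemEntropy p blkV ≤
      shannonEntropy (fun u => ∑ v : V, p (u, v)) +
        shannonEntropy (fun v => ∑ u : U, p (u, v)) -
        semEntropy p (fun x => (blkU x.1, blkV x.2)) := by
  classical
  set pU : U → ℝ := fun u => ∑ v : V, p (u, v) with hpU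
  set pV : V → ℝ := fun v => ∑ u : U, p (u, v) with hpV
  set r : U → J → ℝ := fun u j => ∑ v : V, if blkV v = j then p (u, v) else 0 with hr
  set g : U × V → U × J := fun x => (x.1, blkV x.2) with hg
  set pb : U × V → I × J := fun x => (blkU x.1, blkV x.2) with hpb
  have hpU_nonneg : ∀ u, 0 ≤ pU u := fun u => Finset.sum_nonneg fun v _ => hp (u, v)
  have hr_nonneg : ∀ u j, 0 ≤ r u j := fun u j =>
    Finset.sum_nonneg fun v _ => by by_cases h : blkV v = j <;> simp [h, hp (u, v)]
  have hr_le : ∀ u j, r u j ≤ pU u := fun u j =>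
    Finset.sum_le_sum fun v _ => by by_cases h : blkV v = j <;> simp [h, hp (u, v)]
  -- blockProb of the U-refined partition
  have hRg : ∀ u j, blockProb p g (u, j) = r u j := by
    intro u j
    rw [blockProb, Fintype.sum_prod_type]
    rw [Finset.sum_eq_single u]
    · exact Finset.sum_congr rfl fun v _ => by
        simp [hg, Prod.ext_iff]
    · intro a _ ha
      refine Finset.sum_eq_zero fun v _ => ?_
      simp [hg, Prod.ext_iff, ha]
    · simp
  have hsum_r : ∀ u, ∑ j : J, r u j = pU u := by
    intro u
    rw [hr, Finset.sum_comm]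
    exact Finset.sum_congr rfl fun v _ => by simp
  -- chain rule: H(U, Ṽ) = H(U) + H_s(Ṽ|U)
  have chain : semEntropy p g = shannonEntropy pU + condSemEntropy p blkV := by
    rw [semEntropy, Fintype.sum_prod_type, shannonEntropy, condSemEntropy]
    have : ∀ u, ∑ j : J, blockProb p g (u, j) * Real.logb 2 (blockProb p g (u, j))
        = pU u * Real.logb 2 (pU u) + ∑ j : J, r u j * Real.logb 2 (r u j / pU u) := by
      intro u
      have := split_entropy (fun j => r u j) (hr_nonneg u)
      simp only [hsum_r u] at this
      simp only [hRg]
      exact this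
    rw [Finset.sum_congr rfl fun u _ => this u, Finset.sum_add_distrib, neg_add]
  -- marginal of the product-block distribution
  have hPBmarg : ∀ i, ∑ j : J, blockProb p pb (i, j) = blockProb pU blkU i := by
    intro i
    have e1 : ∑ j : J, blockProb p pb (i, j)
        = ∑ x : U × V, if blkU x.1 = i then p x else 0 := by
      simp only [blockProb]
      rw [Finset.sum_comm]
      refine Finset.sum_congr rfl fun x _ => ?_
      simp [hpb, Prod.ext_iff, ite_and]
    rw [e1, blockProb, Fintype.sum_prod_type]
    refine Finset.sum_congr rfl fun u _ => ?_
    by_cases h : blkU u = i <;> simp [h, hpU]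
  have hS_nonneg : ∀ i, 0 ≤ blockProb pU blkU i := blockProb_nonneg pU blkU hpU_nonneg
  have hs_nonneg : ∀ y : I × J, 0 ≤ blockProb p pb y := blockProb_nonneg p pb hp
  -- split the product-block entropy
  have splitPB : semEntropy p pb = semEntropy pU blkU -
      ∑ i : I, ∑ j : J, blockProb p pb (i, j) *
        Real.logb 2 (blockProb p pb (i, j) / blockProb pU blkU i) := by
    rw [semEntropy, Fintype.sum_prod_type]
    have : ∀ i, ∑ j : J, blockProb p pb (i, j) * Real.logb 2 (blockProb p pb (i, j))
        = blockProb pU blkU i * Real.logb 2 (blockProb pU blkU i) +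
          ∑ j : J, blockProb p pb (i, j) *
            Real.logb 2 (blockProb p pb (i, j) / blockProb pU blkU i) := by
      intro i
      have := split_entropy (fun j => blockProb p pb (i, j)) (fun j => hs_nonneg (i, j))
      simp only [hPBmarg i] at this
      exact this
    rw [Finset.sum_congr rfl fun i _ => this i, Finset.sum_add_distrib, neg_add,
      semEntropy, sub_eq_add_neg]
  -- the fibered sums over blocks of U
  have hfib_r : ∀ i j, ∑ u ∈ Finset.univ.filter (fun u => blkU u = i), r u j
      = blockProb p pb (i, j) := by
    intro i j
    rw [Finset.sum_filter, blockProb, Fintype.sum_prod_type]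
    refine Finset.sum_congr rfl fun u _ => ?_
    by_cases h : blkU u = i <;> simp [hpb, hr, Prod.ext_iff, ite_and, h]
  have hfib_pU : ∀ i, ∑ u ∈ Finset.univ.filter (fun u => blkU u = i), pU u
      = blockProb pU blkU i := by
    intro i
    rw [Finset.sum_filter, blockProb]
  -- conditioning on a coarser variable: log-sum inequality
  have core2 : ∑ i : I, ∑ j : J, blockProb p pb (i, j) *
        Real.logb 2 (blockProb p pb (i, j) / blockProb pU blkU i) ≤
      ∑ u : U, ∑ j : J, r u j * Real.logb 2 (r u j / pU u) := by
    rw [Finset.sum_comm, Finset.sum_comm (s := Finset.univ (α := U))]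
    refine Finset.sum_le_sum fun j _ => ?_
    rw [← Finset.sum_fiberwise Finset.univ blkU (fun u => r u j * Real.logb 2 (r u j / pU u))]
    refine Finset.sum_le_sum fun i _ => ?_
    have := logsum (Finset.univ.filter (fun u => blkU u = i)) (fun u => r u j) pU
      (fun u _ => hr_nonneg u j) (fun u _ => hr_le u j)
    rwa [hfib_r i j, hfib_pU i] at this
  have hcond : condSemEntropy p blkV = -∑ u : U, ∑ j : J, r u j * Real.logb 2 (r u j / pU u) :=
    rfl
  refine ⟨?_, ?_, ?_⟩
  · exact sub_le_sub_left (semEntropy_le_shannonEntropy_s13 p pb hp) _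
  · have hB : semEntropy pV blkV ≤ shannonEntropy pV :=
      semEntropy_le_shannonEntropy_s13 pV blkV (fun v => Finset.sum_nonneg fun u _ => hp (u, v))
    rw [splitPB, hcond]
    linarith [core2]
  · have h3 : semEntropy p pb ≤ semEntropy p g :=
      semEntropy_comp_le p g (fun y => (blkU y.1, y.2)) hp
    linarith [chain, h3]
end

section
/- Semantic data processing inequality (lower part): if U → V → W is a Markov chain of finite random variables, then for any partitions of the alphabets of U and W, I_s(Ũ;W̃) ≤ I(U;W) ≤ I(U;V), where I_s(Ũ;W̃) = H_s(Ũ)+H_s(W̃)−H(U,W). -/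
open Finset

/-- Shannon mutual information `I(U;V) = H(U) + H(V) − H(U,V)` of a joint pmf. -/
noncomputable def mutualInfo {U V : Type*} [Fintype U] [Fintype V] (p : U × V → ℝ) : ℝ :=
  shannonEntropy (fun u => ∑ v : V, p (u, v)) +
    shannonEntropy (fun v => ∑ u : U, p (u, v)) - shannonEntropy p

lemma blockProb_eq {U B : Type*} [Fintype U] [DecidableEq B]
    (p : U → ℝ) (blk : U → B) (i : B) :
    blockProb p blk i = ∑ u ∈ univ.filter (fun u => blk u = i), p u := by
  rw [blockProb, Finset.sum_filter]

lemma blockProb_nonneg_s14 {U B : Type*} [Fintype U] [DecidableEq B]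
    (p : U → ℝ) (blk : U → B) (hp : ∀ u, 0 ≤ p u) (i : B) :
    0 ≤ blockProb p blk i := by
  rw [blockProb_eq]; exact Finset.sum_nonneg fun v _ => hp v

lemma gibbs_term (a b : ℝ) (ha : 0 ≤ a) (hb : 0 ≤ b) (hab : 0 < a → 0 < b) :
    a * Real.logb 2 (b / a) ≤ (b - a) / Real.log 2 := by
  have hl2 : 0 < Real.log 2 := Real.log_pos one_lt_two
  rcases ha.eq_or_lt with h | h
  · rw [← h]
    simpa using div_nonneg hb hl2.le
  · have hb' := hab h
    rw [Real.logb, mul_div_assoc', div_le_div_iff_of_pos_right hl2]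
    have := Real.log_le_sub_one_of_pos (div_pos hb' h)
    have h2 : a * (b / a - 1) = b - a := by field_simp
    nlinarith

lemma dpi {U V W : Type*} [Fintype U] [Fintype V] [Fintype W]
    (p : U × V × W → ℝ)
    (hp : ∀ x, 0 ≤ p x) (hsum : ∑ x, p x = 1)
    (hmarkov : ∀ (u : U) (v : V) (w : W),
      p (u, v, w) * (∑ u' : U, ∑ w' : W, p (u', v, w')) =
        (∑ w' : W, p (u, v, w')) * (∑ u' : U, p (u', v, w))) :
    mutualInfo (fun x : U × W => ∑ v : V, p (x.1, v, x.2)) ≤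
      mutualInfo (fun x : U × V => ∑ w : W, p (x.1, x.2, w)) := by
  have hl2 : 0 < Real.log 2 := Real.log_pos one_lt_two
  -- notation: A u v = pUV, B w = pW, C v = pV, D u w = pUW, E v w = pVW
  set A : U → V → ℝ := fun u v => ∑ w : W, p (u, v, w) with hA_def
  set B : W → ℝ := fun w => ∑ u : U, ∑ v : V, p (u, v, w) with hB_def
  set C : V → ℝ := fun v => ∑ u : U, ∑ w : W, p (u, v, w) with hC_def
  set D : U → W → ℝ := fun u w => ∑ v : V, p (u, v, w) with hD_def
  set E : V → W → ℝ := fun v w => ∑ u : U, p (u, v, w) with hE_def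
  have hAnn : ∀ u v, 0 ≤ A u v := fun u v => Finset.sum_nonneg fun _ _ => hp _
  have hBnn : ∀ w, 0 ≤ B w := fun w =>
    Finset.sum_nonneg fun _ _ => Finset.sum_nonneg fun _ _ => hp _
  have hCnn : ∀ v, 0 ≤ C v := fun v =>
    Finset.sum_nonneg fun _ _ => Finset.sum_nonneg fun _ _ => hp _
  have hDnn : ∀ u w, 0 ≤ D u w := fun u w => Finset.sum_nonneg fun _ _ => hp _
  have hEnn : ∀ v w, 0 ≤ E v w := fun v w => Finset.sum_nonneg fun _ _ => hp _
  -- step 1: the difference of mutual informations as a triple sum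
  have hD1 : mutualInfo (fun x : U × V => ∑ w : W, p (x.1, x.2, w)) -
      mutualInfo (fun x : U × W => ∑ v : V, p (x.1, v, x.2)) =
      ∑ u : U, ∑ v : V, ∑ w : W, p (u, v, w) *
        (Real.logb 2 (A u v) + Real.logb 2 (B w)
          - Real.logb 2 (C v) - Real.logb 2 (D u w)) := by
    have h1 : ∑ u : U, ∑ v : V, ∑ w : W, p (u, v, w) * Real.logb 2 (A u v)
        = ∑ u : U, ∑ v : V, A u v * Real.logb 2 (A u v) := by
      refine Finset.sum_congr rfl fun u _ => Finset.sum_congr rfl fun v _ => ?_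
      rw [← Finset.sum_mul]
    have h2 : ∑ u : U, ∑ v : V, ∑ w : W, p (u, v, w) * Real.logb 2 (C v)
        = ∑ v : V, C v * Real.logb 2 (C v) := by
      rw [Finset.sum_comm]
      refine Finset.sum_congr rfl fun v _ => ?_
      simp_rw [← Finset.sum_mul]
      rfl
    have h3 : ∑ u : U, ∑ v : V, ∑ w : W, p (u, v, w) * Real.logb 2 (B w)
        = ∑ w : W, B w * Real.logb 2 (B w) := by
      rw [show (∑ u : U, ∑ v : V, ∑ w : W, p (u, v, w) * Real.logb 2 (B w))
          = ∑ u : U, ∑ w : W, ∑ v : V, p (u, v, w) * Real.logb 2 (B w) from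
        Finset.sum_congr rfl fun u _ => Finset.sum_comm, Finset.sum_comm]
      refine Finset.sum_congr rfl fun w _ => ?_
      simp_rw [← Finset.sum_mul]
      rfl
    have h4 : ∑ u : U, ∑ v : V, ∑ w : W, p (u, v, w) * Real.logb 2 (D u w)
        = ∑ u : U, ∑ w : W, D u w * Real.logb 2 (D u w) := by
      refine Finset.sum_congr rfl fun u _ => ?_
      rw [Finset.sum_comm]
      refine Finset.sum_congr rfl fun w _ => ?_
      rw [← Finset.sum_mul]
    have expand : ∑ u : U, ∑ v : V, ∑ w : W, p (u, v, w) *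
          (Real.logb 2 (A u v) + Real.logb 2 (B w)
            - Real.logb 2 (C v) - Real.logb 2 (D u w)) =
        (∑ u : U, ∑ v : V, ∑ w : W, p (u, v, w) * Real.logb 2 (A u v))
        + (∑ u : U, ∑ v : V, ∑ w : W, p (u, v, w) * Real.logb 2 (B w))
        - (∑ u : U, ∑ v : V, ∑ w : W, p (u, v, w) * Real.logb 2 (C v))
        - (∑ u : U, ∑ v : V, ∑ w : W, p (u, v, w) * Real.logb 2 (D u w)) := by
      simp only [mul_add, mul_sub, Finset.sum_add_distrib, Finset.sum_sub_distrib]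
    rw [expand, h1, h2, h3, h4]
    have hU : ∀ u : U, (∑ w : W, ∑ v : V, p (u, v, w)) = ∑ v : V, ∑ w : W, p (u, v, w) :=
      fun u => Finset.sum_comm
    simp only [mutualInfo, shannonEntropy, Fintype.sum_prod_type, hU]
    ring
  -- pointwise Gibbs bound
  have hpt : ∀ (u : U) (v : V) (w : W),
      (p (u, v, w) - E v w * D u w / B w) / Real.log 2 ≤
        p (u, v, w) * (Real.logb 2 (A u v) + Real.logb 2 (B w)
          - Real.logb 2 (C v) - Real.logb 2 (D u w)) := by
    intro u v w
    have hbnn : 0 ≤ E v w * D u w / B w :=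
      div_nonneg (mul_nonneg (hEnn v w) (hDnn u w)) (hBnn w)
    rcases (hp (u, v, w)).eq_or_lt with h | h
    · rw [← h, zero_mul]
      rw [zero_sub, neg_div]
      simpa using div_nonneg hbnn hl2.le
    · have hApos : 0 < A u v :=
        lt_of_lt_of_le h (Finset.single_le_sum (fun w' _ => hp (u, v, w')) (mem_univ w))
      have hDpos : 0 < D u w :=
        lt_of_lt_of_le h (Finset.single_le_sum (fun v' _ => hp (u, v', w)) (mem_univ v))
      have hEpos : 0 < E v w :=
        lt_of_lt_of_le h (Finset.single_le_sum (fun u' _ => hp (u', v, w)) (mem_univ u))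
      have hBpos : 0 < B w :=
        lt_of_lt_of_le hDpos (Finset.single_le_sum
          (fun u' _ => Finset.sum_nonneg fun v' _ => hp (u', v', w)) (mem_univ u))
      have hCpos : 0 < C v :=
        lt_of_lt_of_le hApos (Finset.single_le_sum
          (fun u' _ => Finset.sum_nonneg fun w' _ => hp (u', v, w')) (mem_univ u))
      have hmk : p (u, v, w) * C v = A u v * E v w := hmarkov u v w
      have hbpos : 0 < E v w * D u w / B w := div_pos (mul_pos hEpos hDpos) hBpos
      have hba : (E v w * D u w / B w) / p (u, v, w) = C v * D u w / (A u v * B w) := by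
        field_simp
        linear_combination (-1 : ℝ) * hmk
      have hlog : Real.logb 2 ((E v w * D u w / B w) / p (u, v, w)) =
          Real.logb 2 (C v) + Real.logb 2 (D u w)
            - Real.logb 2 (A u v) - Real.logb 2 (B w) := by
        rw [hba, Real.logb_div (by positivity) (by positivity),
          Real.logb_mul hCpos.ne' hDpos.ne', Real.logb_mul hApos.ne' hBpos.ne']
        ring
      have hg := gibbs_term (p (u, v, w)) (E v w * D u w / B w) h.le hbnn (fun _ => hbpos)
      rw [hlog] at hg
      have hr1 : p (u, v, w) * (Real.logb 2 (A u v) + Real.logb 2 (B w)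
          - Real.logb 2 (C v) - Real.logb 2 (D u w)) =
          -(p (u, v, w) * (Real.logb 2 (C v) + Real.logb 2 (D u w)
            - Real.logb 2 (A u v) - Real.logb 2 (B w))) := by ring
      have hr2 : (p (u, v, w) - E v w * D u w / B w) / Real.log 2 =
          -((E v w * D u w / B w - p (u, v, w)) / Real.log 2) := by ring
      rw [hr1, hr2]
      linarith
  -- total mass of p as a triple sum
  have hsum3 : ∑ u : U, ∑ v : V, ∑ w : W, p (u, v, w) = 1 := by
    rw [← hsum]
    simp [Fintype.sum_prod_type]
  -- total mass of the auxiliary measure is at most 1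
  have hS : ∑ u : U, ∑ v : V, ∑ w : W, E v w * D u w / B w ≤ 1 := by
    have step1 : ∀ u : U, ∑ v : V, ∑ w : W, E v w * D u w / B w ≤ ∑ w : W, D u w := by
      intro u
      rw [Finset.sum_comm]
      refine Finset.sum_le_sum fun w _ => ?_
      have hEsum : ∑ v : V, E v w = B w := Finset.sum_comm
      calc ∑ v : V, E v w * D u w / B w
          = (∑ v : V, E v w) * (D u w / B w) := by
            rw [Finset.sum_mul]
            refine Finset.sum_congr rfl fun v _ => ?_
            rw [mul_div_assoc]
        _ = B w * (D u w / B w) := by rw [hEsum]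
        _ ≤ D u w := by
            rcases eq_or_ne (B w) 0 with hb | hb
            · rw [hb, zero_mul]; exact hDnn u w
            · rw [mul_div_cancel₀ _ hb]
    calc ∑ u : U, ∑ v : V, ∑ w : W, E v w * D u w / B w
        ≤ ∑ u : U, ∑ w : W, D u w := Finset.sum_le_sum fun u _ => step1 u
      _ = 1 := by
          rw [← hsum3]
          exact Finset.sum_congr rfl fun u _ => Finset.sum_comm
  -- conclude
  rw [← sub_nonneg, hD1]
  have step : ∑ u : U, ∑ v : V, ∑ w : W,
      (p (u, v, w) - E v w * D u w / B w) / Real.log 2 ≤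
      ∑ u : U, ∑ v : V, ∑ w : W, p (u, v, w) *
        (Real.logb 2 (A u v) + Real.logb 2 (B w)
          - Real.logb 2 (C v) - Real.logb 2 (D u w)) :=
    Finset.sum_le_sum fun u _ => Finset.sum_le_sum fun v _ =>
      Finset.sum_le_sum fun w _ => hpt u v w
  have eq1 : ∑ u : U, ∑ v : V, ∑ w : W,
      (p (u, v, w) - E v w * D u w / B w) / Real.log 2 =
      ((∑ u : U, ∑ v : V, ∑ w : W, p (u, v, w)) -
        ∑ u : U, ∑ v : V, ∑ w : W, E v w * D u w / B w) / Real.log 2 := by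
    simp_rw [← Finset.sum_div, ← Finset.sum_sub_distrib]
  rw [eq1, hsum3] at step
  have : 0 ≤ (1 - ∑ u : U, ∑ v : V, ∑ w : W, E v w * D u w / B w) / Real.log 2 :=
    div_nonneg (by linarith) hl2.le
  linarith

/-- Semantic data processing inequality (lower part): for a Markov chain
`U → V → W`, `I_s(Ũ;W̃) ≤ I(U;W) ≤ I(U;V)`, where
`I_s(Ũ;W̃) = H_s(Ũ) + H_s(W̃) − H(U,W)`. -/
theorem sem_data_processing
    {U V W I K : Type*} [Fintype U] [Fintype V] [Fintype W] [Fintype I] [Fintype K]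
    [DecidableEq I] [DecidableEq K]
    (p : U × V × W → ℝ) (blkU : U → I) (blkW : W → K)
    (hp : ∀ x, 0 ≤ p x) (hsum : ∑ x, p x = 1)
    (hmarkov : ∀ (u : U) (v : V) (w : W),
      p (u, v, w) * (∑ u' : U, ∑ w' : W, p (u', v, w')) =
        (∑ w' : W, p (u, v, w')) * (∑ u' : U, p (u', v, w))) :
    semEntropy (fun u => ∑ v : V, ∑ w : W, p (u, v, w)) blkU +
        semEntropy (fun w => ∑ u : U, ∑ v : V, p (u, v, w)) blkW -
        shannonEntropy (fun x : U × W => ∑ v : V, p (x.1, v, x.2)) ≤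
      mutualInfo (fun x : U × W => ∑ v : V, p (x.1, v, x.2)) ∧
    mutualInfo (fun x : U × W => ∑ v : V, p (x.1, v, x.2)) ≤
      mutualInfo (fun x : U × V => ∑ w : W, p (x.1, x.2, w)) := by
  constructor
  · have hU : (fun u => ∑ w : W, ∑ v : V, p (u, v, w))
        = (fun u => ∑ v : V, ∑ w : W, p (u, v, w)) := funext fun u => Finset.sum_comm
    simp only [mutualInfo]
    rw [hU]
    apply sub_le_sub_right
    refine add_le_add
      (semEntropy_le_shannonEntropy _ _ fun u =>
        Finset.sum_nonneg fun _ _ => Finset.sum_nonneg fun _ _ => hp _)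
      (semEntropy_le_shannonEntropy _ _ fun w =>
        Finset.sum_nonneg fun _ _ => Finset.sum_nonneg fun _ _ => hp _)
  · exact dpi p hp hsum hmarkov
end

section
/- The discrete semantic entropy of the quantized continuous variable equals the entropy of the block probabilities: if a continuous density p on ℝ is partitioned into intervals Ω_i and H_s(Ũ^Δ) denotes the entropy of the probabilities ∫_{Ω_i} p(u) du, then H_s(Ũ) = -∑_i (∫_{Ω_i} p du) log₂ (∫_{Ω_i} p du) ≥ -∫ p log₂ p du − log₂ S, where S = ∑_i (∫_{Ω_i} p du)·L_i is the average synonymous interval length and L_i = |Ω_i|; i.e., the entropy of the block probabilities is lower-bounded by the differential entropy minus log of the average interval length. -/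
open Finset MeasureTheory

/-- Quantized semantic entropy lower bound for a continuous density: partitioning the
support into finitely many disjoint intervals `Ω_i = (a_i, b_i]` with block
probabilities `π_i = ∫_{Ω_i} p`, the entropy of the block probabilities is
lower-bounded by the differential entropy minus the logarithm of the average
synonymous interval length `S = ∑_i π_i (b_i − a_i)`. -/
theorem quantized_semEntropy_ge_differentialEntropy_sub_log_avg_length
    {I : Type*} [Fintype I] (a b : I → ℝ) (hab : ∀ i, a i < b i)
    (hdisj : Pairwise (Function.onFun Disjoint (fun i => Set.Ioc (a i) (b i))))
    (p : ℝ → ℝ) (hp : ∀ u, 0 ≤ p u)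
    (hprob : ∫ u in (⋃ i, Set.Ioc (a i) (b i)), p u = 1)
    (hint : IntegrableOn p (⋃ i, Set.Ioc (a i) (b i)))
    (hintlog : IntegrableOn (fun u => p u * Real.logb 2 (p u))
      (⋃ i, Set.Ioc (a i) (b i))) :
    -∑ i : I, (∫ u in Set.Ioc (a i) (b i), p u) *
        Real.logb 2 (∫ u in Set.Ioc (a i) (b i), p u) ≥
      (-∫ u in (⋃ i, Set.Ioc (a i) (b i)), p u * Real.logb 2 (p u)) -
        Real.logb 2 (∑ i : I, (∫ u in Set.Ioc (a i) (b i), p u) * (b i - a i)) := by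
  classical
  set Ω : I → Set ℝ := fun i => Set.Ioc (a i) (b i) with hΩ
  set π : I → ℝ := fun i => ∫ u in Ω i, p u with hπdef
  set L : I → ℝ := fun i => b i - a i with hLdef
  have hL : ∀ i, 0 < L i := fun i => sub_pos.2 (hab i)
  have hπ0 : ∀ i, 0 ≤ π i := fun i => integral_nonneg fun u => hp u
  have hmeas : ∀ i, MeasurableSet (Ω i) := fun i => measurableSet_Ioc
  have hlog2 : (0:ℝ) < Real.log 2 := Real.log_pos one_lt_two
  -- integrability of p * log p on the union
  have hintlog' : IntegrableOn (fun u => p u * Real.log (p u)) (⋃ i, Ω i) := by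
    have h := hintlog.mul_const (Real.log 2)
    have : (fun u => p u * Real.logb 2 (p u) * Real.log 2)
        = fun u => p u * Real.log (p u) := by
      funext u
      rw [Real.logb, mul_assoc, div_mul_cancel₀ _ hlog2.ne']
    rwa [this] at h
  -- integral over union = finite sum of integrals
  have hsum_int : ∀ f : ℝ → ℝ, IntegrableOn f (⋃ i, Ω i) →
      ∫ u in ⋃ i, Ω i, f u = ∑ i, ∫ u in Ω i, f u := by
    intro f hf
    rw [integral_iUnion hmeas hdisj hf, tsum_fintype]
  have hπsum : ∑ i, π i = 1 := by
    rw [← hsum_int p hint]; exact hprob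
  -- per-interval Jensen: π i * log (π i / L i) ≤ ∫_{Ω i} p log p
  have key : ∀ i, π i * Real.log (π i / L i) ≤ ∫ u in Ω i, p u * Real.log (p u) := by
    intro i
    set μ : Measure ℝ := volume.restrict (Ω i) with hμdef
    have hμuniv : μ Set.univ = ENNReal.ofReal (L i) := by
      rw [hμdef, Measure.restrict_apply_univ, hΩ, Real.volume_Ioc]
    haveI : IsFiniteMeasure μ := ⟨by rw [hμuniv]; exact ENNReal.ofReal_lt_top⟩
    haveI : NeZero μ := ⟨by
      intro h
      have := hμuniv
      rw [h] at this
      simp only [Measure.coe_zero, Pi.zero_apply] at this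
      exact absurd this.symm (by
        simp [ENNReal.ofReal_eq_zero, not_le, hL i])⟩
    have hfi : Integrable p μ := hint.mono_set (Set.subset_iUnion Ω i)
    have hgi : Integrable ((fun x => x * Real.log x) ∘ p) μ :=
      hintlog'.mono_set (Set.subset_iUnion Ω i)
    have hjen := Real.convexOn_mul_log.map_average_le
      Real.continuous_mul_log.continuousOn isClosed_Ici
      (Filter.Eventually.of_forall fun x => hp x) hfi hgi
    rw [average_eq, average_eq, measureReal_def, hμuniv, ENNReal.toReal_ofReal (hL i).le,
      smul_eq_mul, smul_eq_mul] at hjen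
    have h1 : (L i)⁻¹ * ∫ x, p x ∂μ = π i / L i := by
      rw [hμdef, hπdef]; ring
    rw [h1] at hjen
    have h2 := mul_le_mul_of_nonneg_left hjen (hL i).le
    calc π i * Real.log (π i / L i)
        = L i * (π i / L i * Real.log (π i / L i)) := by
          rw [← mul_assoc, mul_div_cancel₀ _ (hL i).ne']
      _ ≤ L i * ((L i)⁻¹ * ∫ x, p x * Real.log (p x) ∂μ) := h2
      _ = ∫ u in Ω i, p u * Real.log (p u) := by
          rw [← mul_assoc, mul_inv_cancel₀ (hL i).ne', one_mul, hμdef]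
  -- sum the per-interval bounds
  have hsum_le : ∑ i, π i * Real.log (π i / L i) ≤ ∫ u in ⋃ i, Ω i, p u * Real.log (p u) := by
    rw [hsum_int _ hintlog']
    exact Finset.sum_le_sum fun i _ => key i
  -- split log of quotient
  have hsplit : ∑ i, π i * Real.log (π i / L i)
      = ∑ i, π i * Real.log (π i) - ∑ i, π i * Real.log (L i) := by
    rw [← Finset.sum_sub_distrib]
    refine Finset.sum_congr rfl fun i _ => ?_
    rcases eq_or_ne (π i) 0 with h | h
    · simp [h]
    · rw [Real.log_div h (hL i).ne', mul_sub]
  -- concave Jensen: ∑ π i log (L i) ≤ log (∑ π i * L i)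
  have hconcave : ∑ i, π i * Real.log (L i) ≤ Real.log (∑ i, π i * L i) := by
    have h := strictConcaveOn_log_Ioi.concaveOn.le_map_sum
      (t := Finset.univ) (w := π) (p := L)
      (fun i _ => hπ0 i) hπsum (fun i _ => hL i)
    simpa [smul_eq_mul] using h
  -- main natural-log inequality
  have main : ∑ i, π i * Real.log (π i) - Real.log (∑ i, π i * L i)
      ≤ ∫ u in ⋃ i, Ω i, p u * Real.log (p u) := by
    have := hsum_le
    rw [hsplit] at this
    linarith
  -- convert to logb 2
  have e1 : ∑ i, π i * Real.logb 2 (π i) = (∑ i, π i * Real.log (π i)) / Real.log 2 := by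
    rw [Finset.sum_div]
    exact Finset.sum_congr rfl fun i _ => by rw [Real.logb, mul_div_assoc]
  have e2 : ∫ u in ⋃ i, Ω i, p u * Real.logb 2 (p u)
      = (∫ u in ⋃ i, Ω i, p u * Real.log (p u)) / Real.log 2 := by
    rw [← integral_div]
    exact setIntegral_congr_fun (MeasurableSet.iUnion hmeas)
      (fun u _ => by rw [Real.logb, mul_div_assoc])
  have e3 : Real.logb 2 (∑ i, π i * L i) = Real.log (∑ i, π i * L i) / Real.log 2 := rfl
  rw [ge_iff_le, e1, e2, e3, ← neg_div, ← neg_div, div_sub_div_same, div_le_div_iff_of_pos_right hlog2]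
  linarith
end
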